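/- The coefficient of the l-th Legendre polynomial in the expansion of the function x ↦ ((1-x)/2)^S on [-1,1] is C_l = (-1)^l (2l+1) S! S! / ((S-l)! (S+l+1)!); that is, ∫_{-1}^{1} P_l(x) ((1-x)/2)^S dx = 2(-1)^l S! S! / ((S-l)!(S+l+1)!) for 0 ≤ l ≤ S. -/

import Mathlib

open Polynomial intervalIntegral Set

/-- iterated deriv of polynomial eval -/
lemma iteratedDeriv_polyeval (p : ℝ[X]) (n : ℕ) :
    iteratedDeriv n (fun x => p.eval x) = fun x => ((derivative^[n] p).eval x) := by
  induction n with
  | zero => simp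
  | succ n ih =>
    rw [iteratedDeriv_succ, ih, Function.iterate_succ_apply']
    funext x
    exact Polynomial.deriv _

lemma exists_factor (l j : ℕ) (hj : j ≤ l) :
    ∃ q : ℝ[X], derivative^[j] (((X:ℝ[X])^2 - 1)^l) = ((X:ℝ[X])^2 - 1)^(l-j) * q := by
  induction j with
  | zero => exact ⟨1, by simp⟩
  | succ j ih =>
    obtain ⟨q, hq⟩ := ih (le_of_lt (Nat.lt_of_succ_le hj))
    refine ⟨(C ((l-j : ℕ) : ℝ)) * (2*X) * q + ((X:ℝ[X])^2 - 1) * derivative q, ?_⟩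
    rw [Function.iterate_succ_apply', hq]
    have h1 : l - j = (l - (j+1)) + 1 := by omega
    rw [derivative_mul, derivative_pow]
    rw [h1]
    simp only [derivative_sub, derivative_pow, derivative_X, derivative_one, map_ofNat,
      Polynomial.C_eq_natCast]
    push_cast
    ring

lemma eval_boundary (l j : ℕ) (hj : j < l) (x : ℝ) (hx : x^2 = 1) :
    (derivative^[j] (((X:ℝ[X])^2 - 1)^l)).eval x = 0 := by
  obtain ⟨q, hq⟩ := exists_factor l j (le_of_lt hj)
  rw [hq]
  have : l - j ≠ 0 := by omega
  simp [hx, zero_pow this]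

lemma derQ (S k : ℕ) (hk : k ≤ S) :
    derivative^[k] ((1 - (X:ℝ[X]))^S)
      = (-1:ℝ[X])^k * ((S.descFactorial k : ℕ) : ℝ[X]) * (1 - X)^(S-k) := by
  induction k with
  | zero => simp
  | succ k ih =>
    rw [Function.iterate_succ_apply', ih (le_of_lt (Nat.lt_of_succ_le hk))]
    have h1 : S - k = (S - (k+1)) + 1 := by omega
    rw [Nat.descFactorial_succ]
    simp only [derivative_mul, derivative_pow, derivative_sub, derivative_one, derivative_X,
      Polynomial.C_eq_natCast, derivative_natCast, derivative_neg, derivative_one,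
      h1, zero_sub, zero_mul]
    have h2 : ((S - k : ℕ) : ℝ[X]) = ((S - (k+1) : ℕ) : ℝ[X]) + 1 := by
      have : (S - k : ℕ) = (S - (k+1)) + 1 := by omega
      rw [this]; push_cast; ring
    simp only [Nat.add_sub_cancel]
    push_cast
    ring

lemma poly_parts (p q : ℝ[X]) (hp1 : p.eval 1 = 0) (hpm : p.eval (-1) = 0) :
    ∫ x in (-1:ℝ)..1, (derivative p).eval x * q.eval x
      = - ∫ x in (-1:ℝ)..1, p.eval x * (derivative q).eval x := by
  have h := intervalIntegral.integral_mul_deriv_eq_deriv_mul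
      (u := fun x => q.eval x) (v := fun x => p.eval x)
      (u' := fun x => (derivative q).eval x) (v' := fun x => (derivative p).eval x)
      (a := (-1:ℝ)) (b := 1)
      (fun x _ => q.hasDerivAt x) (fun x _ => p.hasDerivAt x)
      ((derivative q).continuous_aeval.intervalIntegrable _ _)
      ((derivative p).continuous_aeval.intervalIntegrable _ _)
  simp only [hp1, hpm, mul_zero, sub_zero, zero_sub] at h
  calc ∫ x in (-1:ℝ)..1, (derivative p).eval x * q.eval x
      = ∫ x in (-1:ℝ)..1, q.eval x * (derivative p).eval x := by
        congr 1; funext x; ring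
    _ = 0 - ∫ x in (-1:ℝ)..1, (derivative q).eval x * p.eval x := by
        rw [h]; ring_nf
    _ = - ∫ x in (-1:ℝ)..1, p.eval x * (derivative q).eval x := by
        rw [zero_sub]; congr 1; congr 1; funext x; ring

lemma beta_gen : ∀ a b : ℕ, ∫ x in (-1:ℝ)..1, (1+x)^a * (1-x)^b
    = 2^(a+b+1) * (a.factorial : ℝ) * (b.factorial : ℝ) / ((a+b+1).factorial : ℝ) := by
  intro a
  induction a with
  | zero =>
    intro b
    have : ∫ x in (-1:ℝ)..1, (1+x)^0 * (1-x)^b = ∫ x in (-1:ℝ)..1, (fun y => y^b) (1 - x) := by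
      congr 1; funext x; simp
    rw [this, intervalIntegral.integral_comp_sub_left (fun y => y^b) 1]
    norm_num [integral_pow]
    rw [Nat.factorial_succ]
    push_cast
    have hb : ((b.factorial : ℝ)) ≠ 0 := by positivity
    field_simp
  | succ a ih =>
    intro b
    have key : ∫ x in (-1:ℝ)..1, (1+x)^(a+1) * (1-x)^b
        = ((a:ℝ)+1)/((b:ℝ)+1) * ∫ x in (-1:ℝ)..1, (1+x)^a * (1-x)^(b+1) := by
      have h := intervalIntegral.integral_mul_deriv_eq_deriv_mul
        (u := fun x => (1+x)^(a+1)) (v := fun x => -(1-x)^(b+1)/((b:ℝ)+1))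
        (u' := fun x => ((a:ℝ)+1)*(1+x)^a) (v' := fun x => (1-x)^b)
        (a := (-1:ℝ)) (b := 1)
        (fun x _ => by
          have : HasDerivAt (fun x : ℝ => (1+x)^(a+1)) (((a:ℝ)+1)*(1+x)^a * 1) x := by
            exact (HasDerivAt.fun_pow ((hasDerivAt_id x).const_add 1) (a+1)).congr_deriv (by simp only [id_eq]; push_cast; ring)
          simpa using this)
        (fun x _ => by
          have h1 : HasDerivAt (fun x : ℝ => (1-x)^(b+1)) (((b:ℝ)+1)*(1-x)^b * (-1)) x := by
            exact (HasDerivAt.fun_pow ((hasDerivAt_id x).const_sub 1) (b+1)).congr_deriv (by simp only [id_eq]; push_cast; ring)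
          have h2 := (h1.neg).div_const ((b:ℝ)+1)
          convert h2 using 1
          · funext y; simp only [Pi.neg_apply]
          have hb : ((b:ℝ)+1) ≠ 0 := by positivity
          field_simp)
        ((Continuous.intervalIntegrable (by continuity) _ _))
        ((Continuous.intervalIntegrable (by continuity) _ _))
      have hb : ((b:ℝ)+1) ≠ 0 := by positivity
      rw [h, ← intervalIntegral.integral_const_mul]
      have hz1 : ((1:ℝ)+1)^(a+1) * (-(1-1)^(b+1)/((b:ℝ)+1)) = 0 := by norm_num
      have hz2 : ((1:ℝ)+(-1))^(a+1) * (-(1-(-1))^(b+1)/((b:ℝ)+1)) = 0 := by norm_num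
      rw [hz1, hz2, sub_zero, zero_sub, ← intervalIntegral.integral_neg]
      congr 1
      funext x
      field_simp
    rw [key, ih (b+1)]
    have h1 : ((a+(b+1)+1).factorial : ℝ) ≠ 0 := by positivity
    have h2 : (((a+1)+b+1).factorial : ℝ) ≠ 0 := by positivity
    have h3 : a+(b+1)+1 = (a+1)+b+1 := by omega
    rw [h3] at h1 ⊢
    have hfa : ((a+1).factorial : ℝ) = ((a:ℝ)+1) * (a.factorial : ℝ) := by
      rw [Nat.factorial_succ]; push_cast; ring
    have hfb : ((b+1).factorial : ℝ) = ((b:ℝ)+1) * (b.factorial : ℝ) := by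
      rw [Nat.factorial_succ]; push_cast; ring
    have hb : ((b:ℝ)+1) ≠ 0 := by positivity
    rw [hfa, hfb]
    field_simp

/-- The `l`-th Legendre polynomial via the Rodrigues formula. -/
noncomputable def legendre (l : ℕ) : ℝ → ℝ :=
  fun x => (1 / (2 ^ l * (l.factorial : ℝ))) *
    iteratedDeriv l (fun y => (y ^ 2 - 1) ^ l) x

theorem stmt_6 (S l : ℕ) (hl : l ≤ S) :
    ∫ x in (-1 : ℝ)..1, legendre l x * ((1 - x) / 2) ^ S =
      2 * (-1) ^ l * (S.factorial : ℝ) * (S.factorial : ℝ) /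
        ((S - l).factorial * (S + l + 1).factorial) := by
  have hPeval : ∀ x : ℝ, (((X:ℝ[X])^2 - 1)^l).eval x = (x^2-1)^l := by intro x; simp
  have hQeval : ∀ x : ℝ, ((1 - (X:ℝ[X]))^S).eval x = (1-x)^S := by intro x; simp
  have hleg : ∀ x : ℝ, legendre l x
      = (1/(2^l * (l.factorial : ℝ))) * (derivative^[l] (((X:ℝ[X])^2 - 1)^l)).eval x := by
    intro x
    rw [legendre]
    congr 1
    have h : (fun y : ℝ => (y^2-1)^l) = fun x => (((X:ℝ[X])^2 - 1)^l).eval x := by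
      funext y; simp
    rw [h, iteratedDeriv_polyeval]
  have key : ∀ k, k ≤ l → (∫ x in (-1:ℝ)..1,
        (derivative^[l] (((X:ℝ[X])^2 - 1)^l)).eval x * ((1 - (X:ℝ[X]))^S).eval x)
      = (-1:ℝ)^k * ∫ x in (-1:ℝ)..1,
        (derivative^[l-k] (((X:ℝ[X])^2 - 1)^l)).eval x
          * (derivative^[k] ((1 - (X:ℝ[X]))^S)).eval x := by
    intro k
    induction k with
    | zero => intro _; simp
    | succ k ih =>
      intro hk
      rw [ih (by omega)]
      have h0 : l - k = (l-(k+1))+1 := by omega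
      have hsplit : derivative^[l-k] (((X:ℝ[X])^2 - 1)^l)
          = derivative (derivative^[l-(k+1)] (((X:ℝ[X])^2 - 1)^l)) := by
        rw [h0, Function.iterate_succ_apply']
      rw [hsplit, poly_parts _ _ (eval_boundary l (l-(k+1)) (by omega) 1 (by norm_num))
            (eval_boundary l (l-(k+1)) (by omega) (-1) (by norm_num)),
        ← Function.iterate_succ_apply' derivative k, pow_succ]
      ring
  have step1 : ∫ x in (-1 : ℝ)..1, legendre l x * ((1 - x) / 2) ^ S
      = ((1/(2^l * (l.factorial : ℝ))) * (1/2^S)) * ∫ x in (-1:ℝ)..1,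
          (derivative^[l] (((X:ℝ[X])^2 - 1)^l)).eval x * ((1 - (X:ℝ[X]))^S).eval x := by
    rw [← intervalIntegral.integral_const_mul]
    congr 1
    funext x
    rw [hleg x, hQeval x, div_pow]
    ring
  rw [step1, key l le_rfl, Nat.sub_self, derQ S l hl]
  have hintegrand : ∀ x : ℝ,
      (derivative^[0] (((X:ℝ[X])^2 - 1)^l)).eval x
        * (((-1:ℝ[X])^l * ((S.descFactorial l : ℕ) : ℝ[X]) * (1 - X)^(S-l)).eval x)
      = ((-1:ℝ)^l * (S.descFactorial l : ℝ)) * ((-1:ℝ)^l * ((1+x)^l * (1-x)^S)) := by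
    intro x
    simp only [Function.iterate_zero_apply, hPeval, eval_mul, eval_pow, eval_sub, eval_one,
      eval_X, eval_neg, eval_natCast]
    have h1 : (x^2-1)^l = (-1:ℝ)^l * ((1-x)^l * (1+x)^l) := by
      rw [← mul_pow, ← mul_pow]
      congr 1
      ring
    have h2 : (1-x)^l * (1-x)^(S-l) = (1-x)^S := by
      rw [← pow_add]
      congr 1
      omega
    calc (x^2-1)^l * ((-1:ℝ)^l * (S.descFactorial l : ℝ) * (1-x)^(S-l))
        = (-1:ℝ)^l * (S.descFactorial l : ℝ) * ((-1:ℝ)^l * ((1+x)^l * ((1-x)^l * (1-x)^(S-l)))) := by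
          rw [h1]; ring
      _ = ((-1:ℝ)^l * (S.descFactorial l : ℝ)) * ((-1:ℝ)^l * ((1+x)^l * (1-x)^S)) := by rw [h2]
  have step2 : (∫ x in (-1:ℝ)..1,
      (derivative^[0] (((X:ℝ[X])^2 - 1)^l)).eval x
        * (((-1:ℝ[X])^l * ((S.descFactorial l : ℕ) : ℝ[X]) * (1 - X)^(S-l)).eval x))
      = ((-1:ℝ)^l * (S.descFactorial l : ℝ)) * ((-1:ℝ)^l *
          ∫ x in (-1:ℝ)..1, (1+x)^l * (1-x)^S) := by
    calc (∫ x in (-1:ℝ)..1,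
        (derivative^[0] (((X:ℝ[X])^2 - 1)^l)).eval x
          * (((-1:ℝ[X])^l * ((S.descFactorial l : ℕ) : ℝ[X]) * (1 - X)^(S-l)).eval x))
        = ∫ x in (-1:ℝ)..1,
            ((-1:ℝ)^l * (S.descFactorial l : ℝ) * (-1:ℝ)^l) * ((1+x)^l * (1-x)^S) := by
          congr 1
          funext x
          rw [hintegrand x]
          ring
      _ = ((-1:ℝ)^l * (S.descFactorial l : ℝ)) * ((-1:ℝ)^l *
            ∫ x in (-1:ℝ)..1, (1+x)^l * (1-x)^S) := by
          rw [intervalIntegral.integral_const_mul]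
          ring
  rw [step2, beta_gen l S]
  have hdesc : ((S - l).factorial : ℝ) * (S.descFactorial l : ℝ) = (S.factorial : ℝ) := by
    rw [← Nat.cast_mul, Nat.factorial_mul_descFactorial hl]
  have hcomm : l + S + 1 = S + l + 1 := by omega
  rw [hcomm]
  have h1 : ((S + l + 1).factorial : ℝ) ≠ 0 := by positivity
  have h2 : ((S - l).factorial : ℝ) ≠ 0 := by positivity
  have h3 : ((l.factorial : ℝ)) ≠ 0 := by positivity
  have hdesc' : (S.descFactorial l : ℝ) = (S.factorial : ℝ) / ((S - l).factorial : ℝ) := by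
    field_simp [← hdesc]
    rw [← hdesc]; ring
  rw [hdesc']
  have hpow : (2:ℝ)^(S + l + 1) = 2^l * 2^S * 2 := by
    rw [pow_add, pow_add]
    ring
  rw [hpow]
  field_simp
  have hneg : ((-1:ℝ))^l * (-1)^l = 1 := by
    rw [← pow_add, ← two_mul, pow_mul]
    norm_num
  rw [sq, hneg]
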